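/- The following are equivalent: (i) every even integer greater than 5 can be written as the sum of two odd primes (Goldbach's conjecture); (ii) for every integer n ≥ 7, the graph 𝒢_n is connected. -/

import Mathlib

/-- The finite Goldbach graph `𝒢_n`: vertex set is the even numbers `{0, 2, …, 2n}`,
with distinct `a, b` adjacent iff both `(a+b)/2` and `|a-b|/2` are odd primes. -/
def goldbachGraph (n : ℕ) : SimpleGraph {u : ℕ // Even u ∧ u ≤ 2 * n} where
  Adj a b := (a : ℕ) ≠ (b : ℕ) ∧
    (((a : ℕ) + (b : ℕ)) / 2).Prime ∧ Odd (((a : ℕ) + (b : ℕ)) / 2) ∧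
    ((max (a : ℕ) (b : ℕ) - min (a : ℕ) (b : ℕ)) / 2).Prime ∧
    Odd ((max (a : ℕ) (b : ℕ) - min (a : ℕ) (b : ℕ)) / 2)
  symm := by
    constructor
    rintro a b ⟨h1, h2, h3, h4, h5⟩
    refine ⟨h1.symm, ?_, ?_, ?_, ?_⟩ <;>
      simpa [Nat.add_comm, max_comm, min_comm] using (by assumption)
  loopless := by constructor; rintro a ⟨h1, -⟩; exact h1 rfl

lemma gb_adj_of {n : ℕ} (a b : {u : ℕ // Even u ∧ u ≤ 2 * n}) (p q : ℕ)
    (hp : p.Prime) (op : Odd p) (hq : q.Prime) (oq : Odd q)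
    (hab : (a : ℕ) = (b : ℕ) + 2 * q) (hsum : (a : ℕ) + (b : ℕ) = 2 * p) :
    (goldbachGraph n).Adj a b := by
  have hq0 : 0 < q := hq.pos
  have hba : (b : ℕ) ≤ (a : ℕ) := by omega
  have e1 : ((a : ℕ) + (b : ℕ)) / 2 = p := by omega
  have e2 : (max (a : ℕ) (b : ℕ) - min (a : ℕ) (b : ℕ)) / 2 = q := by
    rw [max_eq_left hba, min_eq_right hba]; omega
  exact ⟨by omega, by rw [e1]; exact hp, by rw [e1]; exact op,
    by rw [e2]; exact hq, by rw [e2]; exact oq⟩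

lemma gb_reach (n : ℕ) (hn : 7 ≤ n)
    (H : ∀ m : ℕ, Even m → 5 < m →
      ∃ p q : ℕ, p.Prime ∧ Odd p ∧ q.Prime ∧ Odd q ∧ m = p + q) :
    ∀ u : ℕ, ∀ h : Even u ∧ u ≤ 2 * n,
      (goldbachGraph n).Reachable ⟨u, h⟩ ⟨0, ⟨Even.zero, Nat.zero_le _⟩⟩ := by
  intro u
  induction u using Nat.strong_induction_on with
  | _ u ih =>
    intro h
    obtain ⟨⟨k, hk⟩, hle⟩ := h
    by_cases h0 : u = 0
    · subst h0
      exact SimpleGraph.Reachable.refl _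
    by_cases h2 : u = 2
    · subst h2
      have h8 : Even 8 ∧ 8 ≤ 2 * n := ⟨⟨4, rfl⟩, by omega⟩
      have h14 : Even 14 ∧ 14 ≤ 2 * n := ⟨⟨7, rfl⟩, by omega⟩
      have a1 : (goldbachGraph n).Adj ⟨8, h8⟩ ⟨2, ⟨⟨1, rfl⟩, hle⟩⟩ :=
        gb_adj_of _ _ 5 3 (by norm_num) (by decide) (by norm_num) (by decide) rfl rfl
      have a2 : (goldbachGraph n).Adj ⟨14, h14⟩ ⟨8, h8⟩ :=
        gb_adj_of _ _ 11 3 (by norm_num) (by decide) (by norm_num) (by decide) rfl rfl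
      have a3 : (goldbachGraph n).Adj ⟨14, h14⟩ ⟨0, ⟨Even.zero, Nat.zero_le _⟩⟩ :=
        gb_adj_of _ _ 7 7 (by norm_num) (by decide) (by norm_num) (by decide) rfl rfl
      exact (a1.symm.reachable.trans a2.symm.reachable).trans a3.reachable
    by_cases h4 : u = 4
    · subst h4
      have h10 : Even 10 ∧ 10 ≤ 2 * n := ⟨⟨5, rfl⟩, by omega⟩
      have a1 : (goldbachGraph n).Adj ⟨10, h10⟩ ⟨4, ⟨⟨2, rfl⟩, hle⟩⟩ :=
        gb_adj_of _ _ 7 3 (by norm_num) (by decide) (by norm_num) (by decide) rfl rfl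
      have a2 : (goldbachGraph n).Adj ⟨10, h10⟩ ⟨0, ⟨Even.zero, Nat.zero_le _⟩⟩ :=
        gb_adj_of _ _ 5 5 (by norm_num) (by decide) (by norm_num) (by decide) rfl rfl
      exact a1.symm.reachable.trans a2.reachable
    -- now u ≥ 6
    have hu6 : 5 < u := by omega
    obtain ⟨p, q, hp, op, hq, oq, hm⟩ := H u ⟨k, hk⟩ hu6
    have key : ∀ p q : ℕ, p.Prime → Odd p → q.Prime → Odd q → q ≤ p → u = p + q →
        (goldbachGraph n).Reachable ⟨u, ⟨⟨k, hk⟩, hle⟩⟩ ⟨0, ⟨Even.zero, Nat.zero_le _⟩⟩ := by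
      intro p q hp op hq oq hqp hm
      have hq0 : 0 < q := hq.pos
      have hblt : p - q < u := by omega
      have hbe : Even (p - q) := by
        obtain ⟨i, hi⟩ := op
        obtain ⟨j, hj⟩ := oq
        exact ⟨i - j, by omega⟩
      have hb : Even (p - q) ∧ p - q ≤ 2 * n := ⟨hbe, by omega⟩
      have a1 : (goldbachGraph n).Adj ⟨u, ⟨⟨k, hk⟩, hle⟩⟩ ⟨p - q, hb⟩ :=
        gb_adj_of _ _ p q hp op hq oq (by simp; omega) (by simp; omega)
      exact a1.reachable.trans (ih (p - q) hblt hb)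
    rcases le_total q p with hqp | hpq
    · exact key p q hp op hq oq hqp hm
    · exact key q p hq oq hp op hpq (by omega)

/-- Goldbach's conjecture (every even integer `> 5` is the sum of two odd
primes) holds iff the Goldbach graph `𝒢_n` is connected for every `n ≥ 7`. -/
theorem stmt_9 :
    (∀ m : ℕ, Even m → 5 < m →
      ∃ p q : ℕ, p.Prime ∧ Odd p ∧ q.Prime ∧ Odd q ∧ m = p + q) ↔
    (∀ n : ℕ, 7 ≤ n → (goldbachGraph n).Connected) := by
  constructor
  · intro H n hn
    haveI : Nonempty {u : ℕ // Even u ∧ u ≤ 2 * n} := ⟨⟨0, Even.zero, Nat.zero_le _⟩⟩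
    apply SimpleGraph.Connected.mk
    intro a b
    exact (gb_reach n hn H a.1 a.2).trans (gb_reach n hn H b.1 b.2).symm
  · intro H m hme hm5
    obtain ⟨k, hk⟩ := hme
    by_cases h14 : m < 14
    · interval_cases m
      · exact ⟨3, 3, by norm_num, by decide, by norm_num, by decide, rfl⟩
      · omega
      · exact ⟨3, 5, by norm_num, by decide, by norm_num, by decide, rfl⟩
      · omega
      · exact ⟨3, 7, by norm_num, by decide, by norm_num, by decide, rfl⟩
      · omega
      · exact ⟨5, 7, by norm_num, by decide, by norm_num, by decide, rfl⟩
      · omega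
    · have hn : 7 ≤ k := by omega
      have hconn := H k hn
      have hv : Even m ∧ m ≤ 2 * k := ⟨⟨k, hk⟩, by omega⟩
      have h0 : Even 0 ∧ 0 ≤ 2 * k := ⟨Even.zero, Nat.zero_le _⟩
      obtain ⟨w⟩ := hconn.preconnected ⟨m, hv⟩ ⟨0, h0⟩
      cases w with
      | nil => simp at *
      | cons hadj _ =>
        rename_i b _
        obtain ⟨hne, hp, op, hq, oq⟩ := hadj
        have hble : (b : ℕ) ≤ m := by
          have := b.2.2; omega
        obtain ⟨j, hj⟩ := b.2.1
        rw [max_eq_left hble, min_eq_right hble] at hq oq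
        refine ⟨(m + (b : ℕ)) / 2, (m - (b : ℕ)) / 2, hp, op, hq, oq, by omega⟩
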